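/- Let F be a piecewise translation of m = d+1 branches in ℝ^d whose translation vectors have rank d, assume the torus rotation R : T → T, R(φ) = φ + π(v_0), is ergodic, and assume the restriction of F to its attractor A is minimal (every F-orbit of a point of A is dense in A). Then the fate map 𝓕 : Ω → {0,…,d}^ℕ is injective. -/

import Mathlib

open MeasureTheory Topology Filter Set

/-- A piecewise translation map (PWT) of `m` branches in `ℝ^d`: a region `Ω`
partitioned into regions `P 0, …, P (m-1)` with null boundaries and pairwise disjoint
interiors, together with translation vectors `v i` such that `P i + v i ⊆ Ω`, and a fixed
measurable resolution `idx` of the ambiguity on overlapping boundaries. -/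
structure PWT (d m : ℕ) where
  Om : Set (Fin d → ℝ)
  P : Fin m → Set (Fin d → ℝ)
  v : Fin m → (Fin d → ℝ)
  idx : (Fin d → ℝ) → Fin m
  compact_Om : IsCompact Om
  region_Om : Om = closure (interior Om)
  compact_P : ∀ i, IsCompact (P i)
  region_P : ∀ i, P i = closure (interior (P i))
  union_P : Om = ⋃ i, P i
  disj_P : ∀ i j, i ≠ j → interior (P i) ∩ interior (P j) = ∅
  null_bd_P : ∀ i, volume (frontier (P i)) = 0
  translate_mem : ∀ i, ∀ x ∈ P i, x + v i ∈ Om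
  idx_mem : ∀ x ∈ Om, x ∈ P (idx x)
  idx_meas : Measurable idx

namespace PWT

variable {d m : ℕ}

/-- The piecewise translation map `F(x) = x + v_{i(x)}`. -/
def F (T : PWT d m) (x : Fin d → ℝ) : Fin d → ℝ := x + T.v (T.idx x)

/-- `Ω_0 = Ω`, `Ω_{n+1} = closure (F(Ω_n))`. -/
def OmSeq (T : PWT d m) : ℕ → Set (Fin d → ℝ)
  | 0 => T.Om
  | n + 1 => closure (T.F '' T.OmSeq n)

/-- The attractor `A = ⋂ₙ Ω_n`. -/
def attractor (T : PWT d m) : Set (Fin d → ℝ) := ⋂ n, T.OmSeq n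

/-- The fate map `𝓕(x) = (i(x), i(F x), i(F² x), …)`. -/
def fate (T : PWT d m) (x : Fin d → ℝ) : ℕ → Fin m := fun n => T.idx (T.F^[n] x)

/-- The matrix whose columns are the lattice generators `v_1 - v_0, …, v_d - v_0`. -/
noncomputable def latMatrix (T : PWT d (d + 1)) : Matrix (Fin d) (Fin d) ℝ :=
  Matrix.of fun i j => (T.v j.succ - T.v 0) i

/-- The canonical projection `π : ℝ^d → T = ℝ^d/L ≅ (ℝ/ℤ)^d`, expressed in the
coordinates given by the lattice basis `v_1 - v_0, …, v_d - v_0` of `L`. -/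
noncomputable def torusProj (T : PWT d (d + 1)) (x : Fin d → ℝ) : Fin d → AddCircle (1 : ℝ) :=
  fun i => ((T.latMatrix⁻¹.mulVec x) i : AddCircle (1 : ℝ))

end PWT


namespace PWTproof
open PWT
variable {d : ℕ}

lemma torusProj_add (T : PWT d (d+1)) (x y : Fin d → ℝ) :
    T.torusProj (x + y) = T.torusProj x + T.torusProj y := by
  funext i
  simp [PWT.torusProj, Matrix.mulVec_add]

lemma isUnit_latMatrix (T : PWT d (d+1))
    (hrank : LinearIndependent ℝ (fun i : Fin d => T.v i.succ - T.v 0)) :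
    IsUnit T.latMatrix :=
  Matrix.linearIndependent_cols_iff_isUnit.mp hrank

lemma torusProj_gen (T : PWT d (d+1))
    (hrank : LinearIndependent ℝ (fun i : Fin d => T.v i.succ - T.v 0)) (j : Fin d) :
    T.torusProj (T.v j.succ - T.v 0) = 0 := by
  have hM := isUnit_latMatrix T hrank
  have hdet : IsUnit T.latMatrix.det := (Matrix.isUnit_iff_isUnit_det _).mp hM
  have h1 : T.v j.succ - T.v 0 = T.latMatrix.mulVec (Pi.single j 1) := by
    rw [Matrix.mulVec_single]
    funext i
    simp [PWT.latMatrix]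
  funext i
  rw [h1]
  show (↑(T.latMatrix⁻¹.mulVec (T.latMatrix.mulVec (Pi.single j 1)) i) : AddCircle (1:ℝ)) = _
  rw [Matrix.mulVec_mulVec, Matrix.nonsing_inv_mul _ hdet, Matrix.one_mulVec]
  rcases eq_or_ne i j with rfl | hij
  · simp only [Pi.single_eq_same]
    exact AddCircle.coe_period 1
  · simp [Pi.single_eq_of_ne hij]

lemma torusProj_v (T : PWT d (d+1))
    (hrank : LinearIndependent ℝ (fun i : Fin d => T.v i.succ - T.v 0)) (i : Fin (d+1)) :
    T.torusProj (T.v i) = T.torusProj (T.v 0) := by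
  induction i using Fin.cases with
  | zero => rfl
  | succ j =>
    have h := torusProj_gen T hrank j
    have : T.v j.succ = (T.v j.succ - T.v 0) + T.v 0 := by abel
    rw [this, torusProj_add, h, zero_add]

lemma torusProj_F (T : PWT d (d+1))
    (hrank : LinearIndependent ℝ (fun i : Fin d => T.v i.succ - T.v 0)) (z : Fin d → ℝ) :
    T.torusProj (T.F z) = T.torusProj z + T.torusProj (T.v 0) := by
  rw [PWT.F, torusProj_add, torusProj_v T hrank]

lemma continuous_torusProj (T : PWT d (d+1)) : Continuous T.torusProj := by
  apply continuous_pi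
  intro i
  exact (AddCircle.continuous_mk' 1).comp
    ((continuous_apply i).comp (Matrix.mulVecLin T.latMatrix⁻¹).continuous_of_finiteDimensional)

lemma F_mem {m : ℕ} (T : PWT d m) {z : Fin d → ℝ} (hz : z ∈ T.Om) : T.F z ∈ T.Om :=
  T.translate_mem _ _ (T.idx_mem z hz)

lemma iter_mem {m : ℕ} (T : PWT d m) {z : Fin d → ℝ} (hz : z ∈ T.Om) (n : ℕ) :
    T.F^[n] z ∈ T.Om := by
  induction n with
  | zero => exact hz
  | succ n ih => rw [Function.iterate_succ_apply']; exact F_mem T ih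

lemma isClosed_OmSeq {m : ℕ} (T : PWT d m) (n : ℕ) : IsClosed (T.OmSeq n) := by
  cases n with
  | zero => exact T.compact_Om.isClosed
  | succ n => exact isClosed_closure

lemma OmSeq_succ_subset {m : ℕ} (T : PWT d m) (n : ℕ) : T.OmSeq (n+1) ⊆ T.OmSeq n := by
  induction n with
  | zero =>
    refine closure_minimal ?_ T.compact_Om.isClosed
    rintro _ ⟨z, hz, rfl⟩; exact F_mem T hz
  | succ n ih => exact closure_mono (Set.image_mono ih)

lemma OmSeq_antitone {m : ℕ} (T : PWT d m) : Antitone T.OmSeq :=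
  antitone_nat_of_succ_le (OmSeq_succ_subset T)

lemma OmSeq_subset_Om {m : ℕ} (T : PWT d m) (n : ℕ) : T.OmSeq n ⊆ T.Om :=
  OmSeq_antitone T (Nat.zero_le n)

lemma iter_mem_OmSeq {m : ℕ} (T : PWT d m) {z : Fin d → ℝ} (hz : z ∈ T.Om) (n : ℕ) :
    T.F^[n] z ∈ T.OmSeq n := by
  induction n with
  | zero => exact hz
  | succ n ih =>
    rw [Function.iterate_succ_apply']
    exact subset_closure (Set.mem_image_of_mem _ ih)

lemma attractor_subset_Om {m : ℕ} (T : PWT d m) : T.attractor ⊆ T.Om :=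
  (Set.iInter_subset _ 0).trans (by rfl)

lemma isClosed_attractor {m : ℕ} (T : PWT d m) : IsClosed T.attractor :=
  isClosed_iInter (isClosed_OmSeq T)

lemma iter_eq_add {m : ℕ} (T : PWT d m) {x y : Fin d → ℝ} (hf : T.fate x = T.fate y) (n : ℕ) :
    T.F^[n] x = T.F^[n] y + (x - y) := by
  induction n with
  | zero => simp
  | succ n ih =>
    have hidx : T.idx (T.F^[n] x) = T.idx (T.F^[n] y) := congrFun hf n
    rw [Function.iterate_succ_apply', Function.iterate_succ_apply', PWT.F, PWT.F, hidx, ih]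
    abel

/-- The set of ambiguity points (in more than one piece). -/
def bad {m : ℕ} (T : PWT d m) : Set (Fin d → ℝ) :=
  ⋃ i, ⋃ j, ⋃ (_ : i ≠ j), T.P i ∩ T.P j

lemma isClosed_bad {m : ℕ} (T : PWT d m) : IsClosed (bad T) := by
  refine isClosed_iUnion_of_finite fun i => isClosed_iUnion_of_finite fun j => ?_
  rw [Set.iUnion_eq_if]
  split
  · exact ((T.compact_P i).isClosed.inter (T.compact_P j).isClosed)
  · exact isClosed_empty

lemma P_subset_Om {m : ℕ} (T : PWT d m) (i : Fin m) : T.P i ⊆ T.Om := by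
  rw [T.union_P]; exact Set.subset_iUnion _ i

lemma bad_subset_Om {m : ℕ} (T : PWT d m) : bad T ⊆ T.Om := by
  refine Set.iUnion_subset fun i => Set.iUnion_subset fun j => Set.iUnion_subset fun _ => ?_
  exact (Set.inter_subset_left).trans (P_subset_Om T i)

lemma isCompact_bad {m : ℕ} (T : PWT d m) : IsCompact (bad T) :=
  T.compact_Om.of_isClosed_subset (isClosed_bad T) (bad_subset_Om T)

lemma bad_subset_frontier {m : ℕ} (T : PWT d m) : bad T ⊆ ⋃ i, frontier (T.P i) := by
  intro u hu
  simp only [bad, Set.mem_iUnion] at hu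
  obtain ⟨i, j, hij, hui, huj⟩ := hu
  refine Set.mem_iUnion.mpr ⟨i, ?_⟩
  rw [frontier]
  refine ⟨subset_closure hui, fun hint => ?_⟩
  have h2 : u ∈ closure (interior (T.P j)) := by rw [← T.region_P j]; exact huj
  obtain ⟨z, hz1, hz2⟩ := mem_closure_iff.mp h2 _ isOpen_interior hint
  have hd := T.disj_P i j hij
  have hz : z ∈ interior (T.P i) ∩ interior (T.P j) := ⟨hz1, hz2⟩
  rw [hd] at hz
  exact hz

lemma volume_bad {m : ℕ} (T : PWT d m) : volume (bad T) = 0 :=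
  measure_mono_null (bad_subset_frontier T) (measure_iUnion_null fun i => T.null_bd_P i)

lemma idx_locally_const {m : ℕ} (T : PWT d m) {u : Fin d → ℝ} (hu : u ∈ T.Om)
    (hbad : u ∉ bad T) :
    ∃ δ > 0, ∀ z ∈ T.Om, dist z u < δ → T.idx z = T.idx u := by
  set C : Set (Fin d → ℝ) := ⋃ j, ⋃ (_ : j ≠ T.idx u), T.P j with hCdef
  have hC : IsClosed C := by
    refine isClosed_iUnion_of_finite fun j => ?_
    rw [Set.iUnion_eq_if]; split
    · exact (T.compact_P j).isClosed
    · exact isClosed_empty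
  have huC : u ∉ C := by
    intro huC
    simp only [hCdef, Set.mem_iUnion] at huC
    obtain ⟨j, hj, hPj⟩ := huC
    exact hbad (Set.mem_iUnion.mpr ⟨j, Set.mem_iUnion.mpr ⟨T.idx u,
      Set.mem_iUnion.mpr ⟨hj, hPj, T.idx_mem u hu⟩⟩⟩)
  obtain ⟨δ, hδ, hball⟩ := Metric.isOpen_iff.mp hC.isOpen_compl u huC
  refine ⟨δ, hδ, fun z hz hdist => ?_⟩
  by_contra hne
  exact (hball (Metric.mem_ball.mpr hdist)) (Set.mem_iUnion.mpr ⟨T.idx z,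
    Set.mem_iUnion.mpr ⟨hne, T.idx_mem z hz⟩⟩)





noncomputable abbrev qmap (d : ℕ) : (Fin d → ℝ) → (Fin d → AddCircle (1:ℝ)) :=
  fun x i => (x i : AddCircle (1:ℝ))

lemma continuous_qmap : Continuous (qmap d) :=
  continuous_pi fun i => (AddCircle.continuous_mk' 1).comp (continuous_apply i)

lemma volume_eq_map_qmap :
    (volume : Measure (Fin d → AddCircle (1:ℝ))) =
      Measure.map (qmap d) (volume.restrict (Set.univ.pi fun _ => Ioc (0:ℝ) 1)) := by
  rw [MeasureTheory.volume_pi]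
  refine Measure.pi_eq fun s hs => ?_
  rw [Measure.map_apply continuous_qmap.measurable (MeasurableSet.univ_pi fun i => hs i)]
  have hpre : qmap d ⁻¹' Set.univ.pi s =
      Set.univ.pi fun i => ((↑) : ℝ → AddCircle (1:ℝ)) ⁻¹' s i := rfl
  rw [hpre, Measure.restrict_apply (MeasurableSet.univ_pi fun i =>
    (AddCircle.measurable_mk' (a := (1:ℝ))) (hs i))]
  rw [← Set.pi_inter_distrib, MeasureTheory.volume_pi, Measure.pi_pi]
  congr 1
  funext i
  have := (AddCircle.measurePreserving_mk 1 0).measure_preimage (hs i).nullMeasurableSet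
  rw [zero_add] at this
  rw [← this, Measure.restrict_apply' measurableSet_Ioc]

lemma volume_qmap_image_null {K : Set (Fin d → ℝ)} (hK : IsCompact K) (h0 : volume K = 0) :
    volume (qmap d '' K) = 0 := by
  have hmeas : MeasurableSet (qmap d '' K) :=
    (hK.image continuous_qmap).isClosed.measurableSet
  rw [volume_eq_map_qmap, Measure.map_apply continuous_qmap.measurable hmeas]
  have hcover : qmap d ⁻¹' (qmap d '' K) ⊆
      ⋃ ζ : Fin d → ℤ, (fun t => t + fun i => ((ζ i : ℝ))) '' K := by
    intro x hx
    obtain ⟨c, hc, hqc⟩ := hx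
    have hz : ∀ i, ∃ z : ℤ, z • (1:ℝ) = x i - c i := by
      intro i
      have : ((c i : AddCircle (1:ℝ))) = (x i : AddCircle (1:ℝ)) := congrFun hqc i
      rw [QuotientAddGroup.eq_iff_sub_mem] at this
      obtain ⟨k, hk⟩ := AddSubgroup.mem_zmultiples_iff.mp this
      exact ⟨-k, by rw [neg_smul, hk]; ring⟩
    choose ζ hζ using hz
    refine Set.mem_iUnion.mpr ⟨ζ, c, hc, ?_⟩
    funext i
    have := hζ i
    rw [zsmul_eq_mul, mul_one] at this
    show c i + (ζ i : ℝ) = x i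
    rw [this]; ring
  refine le_antisymm ?_ zero_le
  calc (volume.restrict (Set.univ.pi fun _ => Ioc (0:ℝ) 1)) (qmap d ⁻¹' (qmap d '' K))
      ≤ volume (⋃ ζ : Fin d → ℤ, (fun t => t + fun i => ((ζ i : ℝ))) '' K) :=
        le_trans (measure_mono hcover) (Measure.restrict_le_self _)
    _ ≤ 0 := by
        refine le_of_eq (measure_iUnion_null fun ζ => ?_)
        have himg : (fun t => t + fun i => ((ζ i : ℝ))) '' K
            = (fun t => t + (- fun i => ((ζ i : ℝ)))) ⁻¹' K := by
          ext t
          constructor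
          · rintro ⟨k, hk, rfl⟩; simpa using hk
          · intro ht; exact ⟨_, ht, by simp⟩
        rw [himg, measure_preimage_add_right]
        exact h0

lemma closure_zmultiples_eq_univ (a : Fin d → AddCircle (1:ℝ))
    (herg : Ergodic (fun φ => φ + a) volume) :
    closure (Set.range fun n : ℤ => n • a) = Set.univ := by
  set S := Set.range fun n : ℤ => n • a with hS
  have hSne : S.Nonempty := ⟨0, 0, zero_smul ℤ a⟩
  set f : (Fin d → AddCircle (1:ℝ)) → ℝ := fun θ => Metric.infDist θ S with hf
  have hcont : Continuous f := Metric.continuous_infDist_pt _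
  have hSa : (fun θ => θ + a) '' S = S := by
    ext t
    constructor
    · rintro ⟨_, ⟨n, rfl⟩, rfl⟩
      exact ⟨n + 1, by show (n+1) • a = n • a + a; rw [add_smul, one_smul]⟩
    · rintro ⟨n, rfl⟩
      refine ⟨(n - 1) • a, ⟨n - 1, rfl⟩, ?_⟩
      show (n-1) • a + a = n • a
      rw [sub_smul, one_smul]
      abel
  have hinv : ∀ θ, f (θ + a) = f θ := by
    intro θ
    have hiso : Isometry (fun θ : Fin d → AddCircle (1:ℝ) => θ + a) :=
      fun x y => by simp [edist_dist, dist_add_right]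
    have := Metric.infDist_image (x := θ) (t := S) hiso
    rw [hSa] at this
    exact this
  have hzero : ∀ r > 0, ∀ θ, f θ ≤ r := by
    intro r hr θ
    by_contra hlt
    push_neg at hlt
    have hmeas : MeasurableSet (f ⁻¹' Ioi r) := (hcont.measurable) measurableSet_Ioi
    have hpre : (fun φ => φ + a) ⁻¹' (f ⁻¹' Ioi r) = f ⁻¹' Ioi r := by
      ext φ; simp [hinv φ]
    rcases herg.ae_empty_or_univ hmeas hpre with h | h
    · have h0 : volume (f ⁻¹' Ioi r) = 0 := by
        rwa [← MeasureTheory.ae_eq_empty]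
      have : f ⁻¹' Ioi r = ∅ := (isOpen_Ioi.preimage hcont).eq_empty_of_measure_zero h0
      have hθ : θ ∈ f ⁻¹' Ioi r := hlt
      rw [this] at hθ
      exact hθ
    · have h0 : volume ((f ⁻¹' Ioi r)ᶜ) = 0 := by
        rwa [← MeasureTheory.ae_eq_univ]
      have hopen : IsOpen (f ⁻¹' Iio r) := isOpen_Iio.preimage hcont
      have hne : (f ⁻¹' Iio r).Nonempty := by
        refine ⟨0, ?_⟩
        have : f 0 ≤ 0 := by
          have h0S : (0 : Fin d → AddCircle (1:ℝ)) ∈ S := ⟨0, zero_smul ℤ a⟩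
          have h00 := Metric.infDist_le_dist_of_mem (x := (0 : Fin d → AddCircle (1:ℝ))) h0S
          rwa [dist_self] at h00
        simp only [Set.mem_preimage, Set.mem_Iio]
        exact lt_of_le_of_lt this hr
      have hsub : f ⁻¹' Iio r ⊆ (f ⁻¹' Ioi r)ᶜ := by
        intro φ hφ
        simp only [Set.mem_compl_iff, Set.mem_preimage, Set.mem_Ioi] at *
        exact not_lt.mpr (le_of_lt hφ)
      exact (hopen.measure_ne_zero volume hne) (measure_mono_null hsub h0)
  refine Set.eq_univ_iff_forall.mpr fun θ => ?_
  refine (Metric.mem_closure_iff_infDist_zero hSne).mpr ?_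
  refine le_antisymm ?_ (Metric.infDist_nonneg)
  by_contra hpos
  push_neg at hpos
  exact absurd (hzero (f θ / 2) (by linarith) θ) (by simp [hf]; linarith)


lemma rotation_tail_closure (a : Fin d → AddCircle (1:ℝ))
    (hcl : closure (Set.range fun n : ℤ => n • a) = Set.univ)
    (θ₀ : Fin d → AddCircle (1:ℝ)) (N : ℕ) :
    closure ((fun n : ℕ => θ₀ + n • a) '' {n | N ≤ n}) = Set.univ := by
  let CN : ℕ → Set (Fin d → AddCircle (1:ℝ)) :=
    fun N => closure ((fun n : ℕ => n • a) '' {n | N ≤ n})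
  have hclosed : ∀ N, IsClosed (CN N) := fun N => isClosed_closure
  have hne : ∀ N, (CN N).Nonempty :=
    fun N => ⟨_, subset_closure ⟨N, le_refl N, rfl⟩⟩
  have hdec : ∀ N, CN (N + 1) ⊆ CN N := by
    intro N
    exact closure_mono (Set.image_mono fun n hn => le_trans (Nat.le_succ N) hn)
  have hCne : (⋂ N, CN N).Nonempty :=
    IsCompact.nonempty_iInter_of_sequence_nonempty_isCompact_isClosed CN hdec hne
      (hclosed 0).isCompact hclosed
  have hstep1 : ∀ c ∈ ⋂ N, CN N, c + a ∈ ⋂ N, CN N := by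
    intro c hc
    refine Set.mem_iInter.mpr fun N => ?_
    have hcN : c ∈ closure ((fun n : ℕ => n • a) '' {n | N ≤ n}) := Set.mem_iInter.mp hc N
    have hmem : (Homeomorph.addRight a) c ∈
        (Homeomorph.addRight a) '' closure ((fun n : ℕ => n • a) '' {n | N ≤ n}) :=
      Set.mem_image_of_mem _ hcN
    rw [(Homeomorph.addRight a).image_closure] at hmem
    have hsub : ⇑(Homeomorph.addRight a) '' ((fun n : ℕ => n • a) '' {n | N ≤ n})
        ⊆ (fun n : ℕ => n • a) '' {n | N ≤ n} := by
      rintro _ ⟨_, ⟨n, hn, rfl⟩, rfl⟩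
      exact ⟨n + 1, Nat.le_succ_of_le hn, by show (n+1) • a = n • a + a; rw [succ_nsmul]⟩
    exact closure_mono hsub hmem
  have hstep2 : ∀ c ∈ ⋂ N, CN N, c - a ∈ ⋂ N, CN N := by
    intro c hc
    refine Set.mem_iInter.mpr fun N => ?_
    have hcN : c ∈ closure ((fun n : ℕ => n • a) '' {n | N + 1 ≤ n}) :=
      Set.mem_iInter.mp hc (N + 1)
    have hmem : (Homeomorph.subRight a) c ∈
        (Homeomorph.subRight a) '' closure ((fun n : ℕ => n • a) '' {n | N + 1 ≤ n}) :=
      Set.mem_image_of_mem _ hcN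
    rw [(Homeomorph.subRight a).image_closure] at hmem
    have hsub : ⇑(Homeomorph.subRight a) '' ((fun n : ℕ => n • a) '' {n | N + 1 ≤ n})
        ⊆ (fun n : ℕ => n • a) '' {n | N ≤ n} := by
      rintro _ ⟨_, ⟨n, hn, rfl⟩, rfl⟩
      have hn' : N + 1 ≤ n := hn
      refine ⟨n - 1, by show N ≤ n - 1; omega, ?_⟩
      show (n - 1) • a = n • a - a
      have hn1 : n = (n - 1) + 1 := by omega
      rw [eq_sub_iff_add_eq, ← succ_nsmul, ← hn1]
    exact closure_mono hsub hmem
  have hz : ∀ z : ℤ, ∀ c ∈ ⋂ N, CN N, c + z • a ∈ ⋂ N, CN N := by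
    intro z
    induction z using Int.induction_on with
    | zero => intro c hc; simpa using hc
    | succ i ih =>
      intro c hc
      have h := hstep1 _ (ih c hc)
      have heq : c + ((i : ℤ) + 1) • a = c + (i : ℤ) • a + a := by
        rw [add_smul, one_smul]; abel
      rwa [heq]
    | pred i ih =>
      intro c hc
      have h := hstep2 _ (ih c hc)
      have heq : c + (-(i:ℤ) - 1) • a = c + (-(i:ℤ)) • a - a := by
        rw [sub_smul, one_smul]; abel
      rwa [heq]
  have hCuniv : ∀ N, closure ((fun n : ℕ => n • a) '' {n | N ≤ n}) = Set.univ := by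
    intro N
    obtain ⟨c₀, hc₀⟩ := hCne
    refine Set.eq_univ_iff_forall.mpr fun θ => ?_
    have h1 : θ - c₀ ∈ closure (Set.range fun n : ℤ => n • a) := by
      rw [hcl]; exact Set.mem_univ _
    have h2 : (Homeomorph.addLeft c₀) (θ - c₀) ∈
        (Homeomorph.addLeft c₀) '' closure (Set.range fun n : ℤ => n • a) :=
      Set.mem_image_of_mem _ h1
    rw [(Homeomorph.addLeft c₀).image_closure] at h2
    have h3 : ⇑(Homeomorph.addLeft c₀) '' (Set.range fun n : ℤ => n • a)
        ⊆ closure ((fun n : ℕ => n • a) '' {n | N ≤ n}) := by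
      rintro _ ⟨_, ⟨z, rfl⟩, rfl⟩
      exact Set.mem_iInter.mp (hz z c₀ hc₀) N
    have h4 := closure_mono h3 h2
    rw [closure_closure] at h4
    have h5 : c₀ + (θ - c₀) = θ := by rw [add_comm, sub_add_cancel]
    rw [← h5]
    exact h4
  have himg : (fun n : ℕ => θ₀ + n • a) '' {n | N ≤ n}
      = (Homeomorph.addLeft θ₀) '' ((fun n : ℕ => n • a) '' {n | N ≤ n}) := by
    rw [← Set.image_comp]; rfl
  rw [himg, ← (Homeomorph.addLeft θ₀).image_closure, hCuniv N]
  exact Set.image_univ_of_surjective (Homeomorph.addLeft θ₀).surjective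

lemma tail_closure_subset_OmSeq {m : ℕ} (T : PWT d m) {y : Fin d → ℝ} (hy : y ∈ T.Om) (N : ℕ) :
    closure ((fun n => T.F^[n] y) '' {n | N ≤ n}) ⊆ T.OmSeq N := by
  refine closure_minimal ?_ (isClosed_OmSeq T N)
  rintro _ ⟨n, hn, rfl⟩
  exact OmSeq_antitone T hn (iter_mem_OmSeq T hy n)

lemma stepW {m : ℕ} (T : PWT d m) {y u : Fin d → ℝ} (hy : y ∈ T.Om)
    (hu : ∀ N, u ∈ closure ((fun n => T.F^[n] y) '' {n | N ≤ n}))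
    (huOm : u ∈ T.Om) (hbad : u ∉ bad T) (N : ℕ) :
    T.F u ∈ closure ((fun n => T.F^[n] y) '' {n | N ≤ n}) := by
  obtain ⟨δ, hδ, hloc⟩ := idx_locally_const T huOm hbad
  rw [Metric.mem_closure_iff]
  intro ε hε
  obtain ⟨z, ⟨n, hn, rfl⟩, hdist⟩ :=
    Metric.mem_closure_iff.mp (hu N) (min δ ε) (lt_min hδ hε)
  refine ⟨T.F^[n+1] y, ⟨n+1, le_trans hn (Nat.le_succ n), rfl⟩, ?_⟩
  rw [Function.iterate_succ_apply']
  have hidx : T.idx (T.F^[n] y) = T.idx u :=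
    hloc _ (iter_mem T hy n) (by rw [dist_comm]; exact lt_of_lt_of_le hdist (min_le_left _ _))
  show dist (T.F u) (T.F (T.F^[n] y)) < ε
  rw [PWT.F, PWT.F, hidx, dist_add_right]
  exact lt_of_lt_of_le hdist (min_le_right _ _)

lemma torusProj_iterate (T : PWT d (d+1))
    (hrank : LinearIndependent ℝ (fun i : Fin d => T.v i.succ - T.v 0)) (z : Fin d → ℝ) (n : ℕ) :
    T.torusProj (T.F^[n] z) = T.torusProj z + n • (T.torusProj (T.v 0)) := by
  induction n with
  | zero => simp
  | succ n ih =>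
    rw [Function.iterate_succ_apply', torusProj_F T hrank, ih, succ_nsmul]
    abel

lemma rot_iterate (a : Fin d → AddCircle (1:ℝ)) (n : ℕ) (θ : Fin d → AddCircle (1:ℝ)) :
    (fun φ => φ + a)^[n] θ = θ + n • a := by
  induction n with
  | zero => simp
  | succ n ih => rw [Function.iterate_succ_apply', ih, succ_nsmul]; abel

lemma volume_torusProj_bad (T : PWT d (d+1)) : volume (T.torusProj '' bad T) = 0 := by
  have himg : T.torusProj '' bad T
      = qmap d '' ((Matrix.mulVecLin T.latMatrix⁻¹) '' bad T) := by
    rw [← Set.image_comp]; rfl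
  rw [himg]
  refine volume_qmap_image_null ((isCompact_bad T).image ?_) ?_
  · exact (Matrix.mulVecLin T.latMatrix⁻¹).continuous_of_finiteDimensional
  · rw [MeasureTheory.Measure.addHaar_image_linearMap, volume_bad, mul_zero]

end PWTproof


open PWTproof in
/-- For a piecewise translation of `m = d+1` branches in `ℝ^d` with
translation vectors of rank `d`, ergodic torus rotation factor, and minimal restriction
`F|_A` to the attractor, the fate map `𝓕` is injective on `Ω`. -/
theorem pwt_fate_injective {d : ℕ} (T : PWT d (d + 1))
    (hrank : LinearIndependent ℝ (fun i : Fin d => T.v i.succ - T.v 0))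
    (herg : Ergodic (fun φ : Fin d → AddCircle (1 : ℝ) => φ + T.torusProj (T.v 0)) volume)
    (hmin : ∀ x ∈ T.attractor,
      T.attractor ⊆ closure (Set.range fun n : ℕ => T.F^[n] x)) :
    ∀ x ∈ T.Om, ∀ y ∈ T.Om, T.fate x = T.fate y → x = y := by
  intro x hx y hy hf
  set w : Fin d → ℝ := x - y with hw
  set a : Fin d → AddCircle (1:ℝ) := T.torusProj (T.v 0) with ha
  have hπbad : volume (T.torusProj '' bad T) = 0 := volume_torusProj_bad T
  have hmeasbad : MeasurableSet (T.torusProj '' bad T) :=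
    ((isCompact_bad T).image (continuous_torusProj T)).isClosed.measurableSet
  have hR : MeasurePreserving (fun φ : Fin d → AddCircle (1:ℝ) => φ + a) volume volume :=
    herg.toMeasurePreserving
  have hZ : volume (⋃ n : ℕ,
      (fun θ : Fin d → AddCircle (1:ℝ) => θ + n • a) ⁻¹' (T.torusProj '' bad T)) = 0 := by
    refine measure_iUnion_null fun n => ?_
    have hfun : (fun θ : Fin d → AddCircle (1:ℝ) => θ + n • a)
        = (fun φ : Fin d → AddCircle (1:ℝ) => φ + a)^[n] := by
      funext θ; rw [rot_iterate]
    rw [hfun, (hR.iterate n).measure_preimage hmeasbad.nullMeasurableSet]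
    exact hπbad
  have hθex : ∃ θ : Fin d → AddCircle (1:ℝ), θ ∉ ⋃ n : ℕ,
      (fun θ : Fin d → AddCircle (1:ℝ) => θ + n • a) ⁻¹' (T.torusProj '' bad T) := by
    by_contra hcon
    push_neg at hcon
    have huniv : (Set.univ : Set (Fin d → AddCircle (1:ℝ))) ⊆ ⋃ n : ℕ,
        (fun θ : Fin d → AddCircle (1:ℝ) => θ + n • a) ⁻¹' (T.torusProj '' bad T) :=
      fun θ _ => hcon θ
    exact (isOpen_univ.measure_ne_zero volume Set.univ_nonempty)
      (measure_mono_null huniv hZ)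
  obtain ⟨θ, hθ⟩ := hθex
  have hθn : ∀ n : ℕ, θ + n • a ∉ T.torusProj '' bad T :=
    fun n hmem => hθ (Set.mem_iUnion.mpr ⟨n, hmem⟩)
  have hdense := closure_zmultiples_eq_univ a herg
  have hclcomp : ∀ N : ℕ, IsCompact (closure ((fun n => T.F^[n] y) '' {n | N ≤ n})) :=
    fun N => T.compact_Om.of_isClosed_subset isClosed_closure
      ((tail_closure_subset_OmSeq T hy N).trans (OmSeq_subset_Om T N))
  have hfibne : ∀ N : ℕ, ((closure ((fun n => T.F^[n] y) '' {n | N ≤ n}))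
      ∩ T.torusProj ⁻¹' {θ}).Nonempty := by
    intro N
    have h1 : T.torusProj '' ((fun n => T.F^[n] y) '' {n | N ≤ n})
        = (fun n : ℕ => T.torusProj y + n • a) '' {n | N ≤ n} := by
      rw [← Set.image_comp]
      refine Set.image_congr fun n _ => ?_
      exact torusProj_iterate T hrank y n
    have h2 : T.torusProj '' (closure ((fun n => T.F^[n] y) '' {n | N ≤ n}))
        = closure ((fun n : ℕ => T.torusProj y + n • a) '' {n | N ≤ n}) := by
      refine Set.Subset.antisymm ?_ ?_
      · rw [← h1]
        exact image_closure_subset_closure_image (continuous_torusProj T)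
      · rw [← h1]
        refine closure_minimal (Set.image_mono subset_closure) ?_
        exact (((hclcomp N).image (continuous_torusProj T))).isClosed
    have h3 : θ ∈ T.torusProj '' (closure ((fun n => T.F^[n] y) '' {n | N ≤ n})) := by
      rw [h2, rotation_tail_closure a hdense (T.torusProj y) N]
      exact Set.mem_univ θ
    obtain ⟨u, hu1, hu2⟩ := h3
    exact ⟨u, hu1, by simp [hu2]⟩
  have hcldec : ∀ N : ℕ, closure ((fun n => T.F^[n] y) '' {n | N + 1 ≤ n})
      ⊆ closure ((fun n => T.F^[n] y) '' {n | N ≤ n}) :=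
    fun N => closure_mono (Set.image_mono fun n hn => le_trans (Nat.le_succ N) hn)
  obtain ⟨u, hu⟩ := IsCompact.nonempty_iInter_of_sequence_nonempty_isCompact_isClosed
    (fun N => (closure ((fun n => T.F^[n] y) '' {n | N ≤ n})) ∩ T.torusProj ⁻¹' {θ})
    (fun N => Set.inter_subset_inter_left _ (hcldec N))
    hfibne
    ((hclcomp 0).inter_right ((isClosed_singleton).preimage (continuous_torusProj T)))
    (fun N => (isClosed_closure).inter ((isClosed_singleton).preimage (continuous_torusProj T)))
  have huW : ∀ N : ℕ, u ∈ closure ((fun n => T.F^[n] y) '' {n | N ≤ n}) :=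
    fun N => (Set.mem_iInter.mp hu N).1
  have huθ : T.torusProj u = θ := by
    have h := (Set.mem_iInter.mp hu 0).2
    simpa using h
  have hWA : ∀ v : Fin d → ℝ,
      (∀ N : ℕ, v ∈ closure ((fun n => T.F^[n] y) '' {n | N ≤ n})) → v ∈ T.attractor :=
    fun v hv => Set.mem_iInter.mpr fun N => tail_closure_subset_OmSeq T hy N (hv N)
  have hWOm : ∀ v : Fin d → ℝ,
      (∀ N : ℕ, v ∈ closure ((fun n => T.F^[n] y) '' {n | N ≤ n})) → v ∈ T.Om :=
    fun v hv => attractor_subset_Om T (hWA v hv)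
  have horb : ∀ n : ℕ, ∀ N : ℕ, T.F^[n] u ∈ closure ((fun n => T.F^[n] y) '' {n | N ≤ n}) := by
    intro n
    induction n with
    | zero => exact huW
    | succ n ih =>
      intro N
      rw [Function.iterate_succ_apply']
      have hbadn : T.F^[n] u ∉ bad T := by
        intro hmem
        have hmem2 : T.torusProj (T.F^[n] u) ∈ T.torusProj '' bad T :=
          Set.mem_image_of_mem _ hmem
        rw [torusProj_iterate T hrank u n, huθ] at hmem2
        exact hθn n hmem2
      exact stepW T hy ih (hWOm _ ih) hbadn N
  have huA : u ∈ T.attractor := hWA u huW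
  have hAW : ∀ b ∈ T.attractor, ∀ N : ℕ,
      b ∈ closure ((fun n => T.F^[n] y) '' {n | N ≤ n}) := by
    intro b hb
    have h1 := hmin u huA hb
    have h2 : Set.range (fun n : ℕ => T.F^[n] u) ⊆
        ⋂ N : ℕ, closure ((fun n => T.F^[n] y) '' {n | N ≤ n}) := by
      rintro _ ⟨n, rfl⟩
      exact Set.mem_iInter.mpr (horb n)
    have h3 := closure_mono h2 h1
    rw [IsClosed.closure_eq (isClosed_iInter fun N => isClosed_closure)] at h3
    exact fun N => Set.mem_iInter.mp h3 N
  have hWwA : ∀ v : Fin d → ℝ,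
      (∀ N : ℕ, v ∈ closure ((fun n => T.F^[n] y) '' {n | N ≤ n})) → v + w ∈ T.attractor := by
    intro v hv
    refine Set.mem_iInter.mpr fun N => ?_
    have h1 : v + w ∈ closure ((fun t => t + w) ''
        ((fun n => T.F^[n] y) '' {n | N ≤ n})) := by
      have h0 : v + w ∈ (fun t => t + w) ''
          (closure ((fun n => T.F^[n] y) '' {n | N ≤ n})) :=
        Set.mem_image_of_mem _ (hv N)
      exact image_closure_subset_closure_image (continuous_add_right w) h0
    have h2 : (fun t => t + w) '' ((fun n => T.F^[n] y) '' {n | N ≤ n}) ⊆ T.OmSeq N := by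
      rintro _ ⟨_, ⟨n, hn, rfl⟩, rfl⟩
      have heq := iter_eq_add T hf n
      rw [← hw] at heq
      show T.F^[n] y + w ∈ T.OmSeq N
      rw [← heq]
      exact OmSeq_antitone T hn (iter_mem_OmSeq T hx n)
    exact closure_minimal h2 (isClosed_OmSeq T N) h1
  have hAw : ∀ b ∈ T.attractor, b + w ∈ T.attractor :=
    fun b hb => hWwA b (hAW b hb)
  have hAne : T.attractor.Nonempty := ⟨u, huA⟩
  have hAcomp : IsCompact T.attractor :=
    T.compact_Om.of_isClosed_subset (isClosed_attractor T) (attractor_subset_Om T)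
  have hφcont : Continuous (fun b : Fin d → ℝ => ∑ i, w i * b i) := by
    apply continuous_finset_sum
    intro i _
    exact continuous_const.mul (continuous_apply i)
  obtain ⟨b0, hb0A, hb0max⟩ := hAcomp.exists_isMaxOn hAne hφcont.continuousOn
  have hle : (∑ i, w i * (b0 + w) i) ≤ ∑ i, w i * b0 i :=
    isMaxOn_iff.mp hb0max _ (hAw b0 hb0A)
  have hsum : (∑ i, w i * (b0 + w) i) = (∑ i, w i * b0 i) + ∑ i, w i * w i := by
    rw [← Finset.sum_add_distrib]
    refine Finset.sum_congr rfl fun i _ => ?_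
    show w i * (b0 i + w i) = w i * b0 i + w i * w i
    ring
  have hsum0 : (∑ i, w i * w i) ≤ 0 := by
    rw [hsum] at hle; linarith
  have hw0 : w = 0 := by
    funext i
    have hnn : ∀ j ∈ Finset.univ, 0 ≤ w j * w j := fun j _ => mul_self_nonneg _
    have hz0 : (∑ i, w i * w i) = 0 := le_antisymm hsum0 (Finset.sum_nonneg hnn)
    exact mul_self_eq_zero.mp ((Finset.sum_eq_zero_iff_of_nonneg hnn).mp hz0 i (Finset.mem_univ i))
  have hxy : x - y = 0 := by rw [← hw0]
  exact sub_eq_zero.mp hxy
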